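/- If the first coarse-graining in a sequence is C₁ and C_{n+1} is rougher than the reversed preceding sequence, i.e., C_{n+1} ↪ (C_n,…,C₁) (for every multi-index (i_n,…,i₁) there is P_{i_{n+1}} ∈ C_{n+1} with P_{i₁}⋯P_{i_n} P_{i_{n+1}} = P_{i₁}⋯P_{i_n}), then adding C_{n+1} leaves the observational entropy unchanged: S_O(C₁,…,C_n,C_{n+1})(ρ) = S_O(C₁,…,C_n)(ρ) for all density matrices ρ. -/
import Mathlib


open scoped BigOperators ComplexOrder
open Matrix

/-- A coarse-graining: a family of nonzero, mutually orthogonal Hermitian projectors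
summing to the identity. -/
def IsCoarseGraining {n : Type} [Fintype n] [DecidableEq n] {ι : Type} [Fintype ι]
    (P : ι → Matrix n n ℂ) : Prop :=
  (∀ i, (P i).IsHermitian) ∧ (∀ i, P i * P i = P i) ∧ (∀ i, P i ≠ 0) ∧
  (∀ i j, i ≠ j → P i * P j = 0) ∧ (∑ i, P i = 1)

/-- A density matrix: positive semidefinite with unit trace. -/
def IsDensityMatrix {n : Type} [Fintype n] [DecidableEq n] (ρ : Matrix n n ℂ) : Prop :=
  ρ.PosSemidef ∧ ρ.trace = 1

/-- Probability of macrostate `i`: `p_i = tr(P_i ρ)`. -/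
noncomputable def prob {n : Type} [Fintype n] [DecidableEq n] {ι : Type} [Fintype ι]
    (P : ι → Matrix n n ℂ) (ρ : Matrix n n ℂ) (i : ι) : ℝ :=
  ((P i * ρ).trace).re

/-- Volume of macrostate `i`: `tr(P_i)`. -/
noncomputable def vol {n : Type} [Fintype n] [DecidableEq n] {ι : Type} [Fintype ι]
    (P : ι → Matrix n n ℂ) (i : ι) : ℝ :=
  ((P i).trace).re

/-- Observational entropy `S_O(C)(ρ) = -∑_{i : p_i ≠ 0} p_i ln (p_i / tr P_i)`.
(Terms with `p_i = 0` vanish since `0 * log _ = 0`.) -/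
noncomputable def obsEntropy {n : Type} [Fintype n] [DecidableEq n] {ι : Type} [Fintype ι]
    (P : ι → Matrix n n ℂ) (ρ : Matrix n n ℂ) : ℝ :=
  -∑ i, prob P ρ i * Real.log (prob P ρ i / vol P i)

/-- The descending product `P_{i_n} ⋯ P_{i₁}` for a sequence of coarse-grainings and a
multi-index `i`. -/
noncomputable def seqProd {n : Type} [Fintype n] [DecidableEq n] {N : ℕ} {ι : Fin N → Type}
    (P : ∀ k, ι k → Matrix n n ℂ) (i : ∀ k, ι k) : Matrix n n ℂ :=
  ((List.finRange N).reverse.map (fun k => P k (i k))).prod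

/-- Probability of the multi-macrostate `(i₁, …, i_n)`:
`p_{i₁,…,i_n} = tr(P_{i_n}⋯P_{i₁} ρ P_{i₁}⋯P_{i_n})`. -/
noncomputable def mProb {n : Type} [Fintype n] [DecidableEq n] {N : ℕ} {ι : Fin N → Type}
    [∀ k, Fintype (ι k)] (P : ∀ k, ι k → Matrix n n ℂ) (ρ : Matrix n n ℂ)
    (i : ∀ k, ι k) : ℝ :=
  ((seqProd P i * ρ * (seqProd P i)ᴴ).trace).re

/-- Volume of the multi-macrostate `(i₁, …, i_n)`:
`V_{i₁,…,i_n} = tr(P_{i_n}⋯P_{i₁}⋯P_{i_n})`. -/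
noncomputable def mVol {n : Type} [Fintype n] [DecidableEq n] {N : ℕ} {ι : Fin N → Type}
    [∀ k, Fintype (ι k)] (P : ∀ k, ι k → Matrix n n ℂ) (i : ∀ k, ι k) : ℝ :=
  ((seqProd P i * (seqProd P i)ᴴ).trace).re

/-- Observational entropy with multiple coarse-grainings
`S_O(C₁,…,C_n)(ρ) = -∑ p_{i₁,…,i_n} ln (p_{i₁,…,i_n} / V_{i₁,…,i_n})`. -/
noncomputable def mObsEntropy {n : Type} [Fintype n] [DecidableEq n] {N : ℕ} {ι : Fin N → Type}
    [∀ k, Fintype (ι k)] (P : ∀ k, ι k → Matrix n n ℂ) (ρ : Matrix n n ℂ) : ℝ :=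
  -∑ i : (∀ k, ι k), mProb P ρ i * Real.log (mProb P ρ i / mVol P i)

/-- The ascending product `P_{i₁} ⋯ P_{i_n}`. -/
noncomputable def ascProd {n : Type} [Fintype n] [DecidableEq n] {N : ℕ} {ι : Fin N → Type}
    (P : ∀ k, ι k → Matrix n n ℂ) (i : ∀ k, ι k) : Matrix n n ℂ :=
  ((List.finRange N).map (fun k => P k (i k))).prod

lemma finRange_concat (N : ℕ) :
    List.finRange (N + 1) = (List.finRange N).map Fin.castSucc ++ [Fin.last N] := by
  rw [← List.ofFn_id, List.ofFn_succ']
  rw [← List.ofFn_id, List.map_ofFn, List.concat_eq_append]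
  rfl

lemma seqProd_succ {n : Type} [Fintype n] [DecidableEq n] {N : ℕ} {ι : Fin (N + 1) → Type}
    (P : ∀ k, ι k → Matrix n n ℂ) (i : ∀ k, ι k) :
    seqProd P i = P (Fin.last N) (i (Fin.last N)) *
      seqProd (fun k : Fin N => P k.castSucc) (fun k => i k.castSucc) := by
  unfold seqProd
  rw [finRange_concat, List.reverse_append, List.map_append, List.prod_append]
  simp [List.map_reverse, List.map_map, Function.comp_def]

lemma conjTranspose_seqProd {n : Type} [Fintype n] [DecidableEq n] {N : ℕ}
    {ι : Fin N → Type} (P : ∀ k, ι k → Matrix n n ℂ) (i : ∀ k, ι k)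
    (hH : ∀ k, ∀ j : ι k, (P k j).IsHermitian) :
    (seqProd P i)ᴴ = ascProd P i := by
  unfold seqProd ascProd
  rw [Matrix.conjTranspose_list_prod]
  simp only [List.map_reverse, List.map_map, List.reverse_reverse]
  congr 1
  apply List.map_congr_left
  intro k _
  exact hH k (i k)

/-- if `C_{n+1} ↪ (C_n,…,C₁)` (for every multi-index there is
`P_{i_{n+1}} ∈ C_{n+1}` with `P_{i₁}⋯P_{i_n} P_{i_{n+1}} = P_{i₁}⋯P_{i_n}`), then adding
`C_{n+1}` leaves the observational entropy unchanged. -/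
theorem mObsEntropy_redundant_last {n : Type} [Fintype n] [DecidableEq n] {N : ℕ}
    {ι : Fin (N + 1) → Type} [∀ k, Fintype (ι k)]
    (P : ∀ k, ι k → Matrix n n ℂ) (ρ : Matrix n n ℂ)
    (hP : ∀ k, IsCoarseGraining (P k)) (hρ : IsDensityMatrix ρ)
    (hred : ∀ i : ∀ k : Fin N, ι k.castSucc, ∃ j : ι (Fin.last N),
      ascProd (fun k : Fin N => P k.castSucc) i * P (Fin.last N) j =
        ascProd (fun k : Fin N => P k.castSucc) i) :
    mObsEntropy P ρ = mObsEntropy (fun k : Fin N => P k.castSucc) ρ := by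
  classical
  set Q : ∀ k : Fin N, ι k.castSucc → Matrix n n ℂ := fun k => P k.castSucc with hQ
  unfold mObsEntropy
  congr 1
  rw [← (Fin.snocEquiv ι).sum_comp, Fintype.sum_prod_type]
  rw [Finset.sum_comm]
  apply Finset.sum_congr rfl
  intro i' _
  -- choose the redundant index
  obtain ⟨j₀, hj₀⟩ := hred i'
  have hHerm : ∀ j, (P (Fin.last N) j).IsHermitian := (hP (Fin.last N)).1
  have hBherm : (seqProd Q i')ᴴ = ascProd Q i' :=
    conjTranspose_seqProd Q i' (fun k jj => (hP k.castSucc).1 jj)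
  have hfix : P (Fin.last N) j₀ * seqProd Q i' = seqProd Q i' := by
    have := congrArg Matrix.conjTranspose hj₀
    rw [Matrix.conjTranspose_mul, ← hBherm, Matrix.conjTranspose_conjTranspose,
      (hHerm j₀).eq] at this
    exact this
  have hseq : ∀ j, seqProd P (Fin.snocEquiv ι ⟨j, i'⟩) = P (Fin.last N) j * seqProd Q i' := by
    intro j
    rw [seqProd_succ]
    congr 1
    · simp [Fin.snocEquiv]
    · unfold seqProd
      congr 1
      apply List.map_congr_left
      intro k _
      simp [Fin.snocEquiv, hQ]
  rw [Finset.sum_eq_single j₀]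
  · have : seqProd P (Fin.snocEquiv ι ⟨j₀, i'⟩) = seqProd Q i' := by rw [hseq, hfix]
    unfold mProb mVol
    rw [this]
  · intro j _ hj
    have hz : seqProd P (Fin.snocEquiv ι ⟨j, i'⟩) = 0 := by
      rw [hseq, ← hfix, ← mul_assoc, (hP (Fin.last N)).2.2.2.1 j j₀ hj, zero_mul]
    unfold mProb
    rw [hz]
    simp
  · intro h
    exact absurd (Finset.mem_univ j₀) h
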